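/- Let Y be finite and let p_D, p_n be full-support probability distributions on Y. Define α(y) = p_n(y)·σ(ξ*(y)) with ξ*(y) = log(p_D(y)/p_n(y)). Then Σ_y α(y) = Σ_y p_n(y)·p_D(y)/(p_n(y)+p_D(y)) ≤ 1/2, with equality iff p_n = p_D. -/
import Mathlib


noncomputable def sigmoid (z : ℝ) : ℝ := 1 / (1 + Real.exp (-z))

lemma sigmoid_log (a b : ℝ) (ha : 0 < a) (hb : 0 < b) :
    a * sigmoid (Real.log (b / a)) = a * b / (a + b) := by
  unfold sigmoid
  rw [← Real.log_inv, Real.exp_log (by positivity)]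
  field_simp
  ring

lemma term_le (a b : ℝ) (ha : 0 < a) (hb : 0 < b) :
    a * b / (a + b) ≤ (a + b) / 4 := by
  rw [div_le_div_iff₀ (by positivity) (by norm_num)]
  nlinarith [sq_nonneg (a - b)]

lemma term_lt (a b : ℝ) (ha : 0 < a) (hb : 0 < b) (hne : a ≠ b) :
    a * b / (a + b) < (a + b) / 4 := by
  rw [div_lt_div_iff₀ (by positivity) (by norm_num)]
  have h2 : (0:ℝ) < (a - b) ^ 2 := by
    have h3 : a - b ≠ 0 := sub_ne_zero.mpr hne
    positivity
  nlinarith [h2]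

theorem alpha_sum_bound {Y : Type*} [Fintype Y] [Nonempty Y]
    (pD pn : Y → ℝ) (hpD : ∀ y, 0 < pD y) (hpn : ∀ y, 0 < pn y)
    (hDs : ∑ y, pD y = 1) (hns : ∑ y, pn y = 1) :
    (∑ y, pn y * sigmoid (Real.log (pD y / pn y)))
      = ∑ y, pn y * pD y / (pn y + pD y) ∧
    (∑ y, pn y * pD y / (pn y + pD y)) ≤ 1 / 2 ∧
    ((∑ y, pn y * pD y / (pn y + pD y)) = 1 / 2 ↔ pn = pD) := by
  have hsum4 : (∑ y, (pn y + pD y) / 4) = 1 / 2 := by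
    rw [← Finset.sum_div, Finset.sum_add_distrib, hDs, hns]; norm_num
  refine ⟨Finset.sum_congr rfl fun y _ => sigmoid_log _ _ (hpn y) (hpD y), ?_, ?_⟩
  · calc (∑ y, pn y * pD y / (pn y + pD y)) ≤ ∑ y, (pn y + pD y) / 4 :=
          Finset.sum_le_sum fun y _ => term_le _ _ (hpn y) (hpD y)
      _ = 1 / 2 := hsum4
  · constructor
    · intro h
      by_contra hne
      obtain ⟨y0, hy0⟩ : ∃ y, pn y ≠ pD y := by
        by_contra h'; push_neg at h'; exact hne (funext h')
      have : (∑ y, pn y * pD y / (pn y + pD y)) < ∑ y, (pn y + pD y) / 4 :=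
        Finset.sum_lt_sum (fun y _ => term_le _ _ (hpn y) (hpD y))
          ⟨y0, Finset.mem_univ _, term_lt _ _ (hpn y0) (hpD y0) hy0⟩
      rw [h, hsum4] at this
      exact lt_irrefl _ this
    · intro h
      subst h
      rw [← hsum4]
      refine Finset.sum_congr rfl fun y _ => ?_
      have hp := hpn y
      rw [div_eq_div_iff (by positivity) (by norm_num)]
      ring
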